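/- Let P : C̃ → C together with ramification numbers e be a d-fold ramified covering of finite categories, and let χ_C(t) = Σ_{n≥0} #N̄_n(C) tⁿ ∈ ℤ⟦t⟧ and similarly χ_{C̃}(t). Then as formal power series, χ_{C̃}(t) = d·χ_C(t) − d·#Ob(C) + #Ob(C̃); equivalently, χ_{C̃}(t) = d·χ_C(t) − V where V = Σ_{x̃ ∈ Ob(C̃)} (e(x̃) − 1). -/

import Mathlib

open CategoryTheory

universe u

/-- The set of morphisms of `C` with target `x`, encoded as a sigma type. -/
abbrev Tgt (C : Type u) [SmallCategory C] (x : C) : Type u := Σ a : C, a ⟶ x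

/-- The set of morphisms of `C` with source `x`, encoded as a sigma type. -/
abbrev Src (C : Type u) [SmallCategory C] (x : C) : Type u := Σ b : C, x ⟶ b

/-- The map `T(x̃) → T(P x̃)` induced by a functor `P`. -/
def tgtMap {D C : Type u} [SmallCategory D] [SmallCategory C] (P : D ⥤ C) (x : D) :
    Tgt D x → Tgt C (P.obj x) := fun g => ⟨P.obj g.1, P.map g.2⟩

/-- The map `S(x̃) → S(P x̃)` induced by a functor `P`. -/
def srcMap {D C : Type u} [SmallCategory D] [SmallCategory C] (P : D ⥤ C) (x : D) :
    Src D x → Src C (P.obj x) := fun g => ⟨P.obj g.1, P.map g.2⟩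

/-- `P : D ⥤ C` together with ramification numbers `e` is a ramified covering:
`C` is connected, `e x ≥ 1` for all `x`, `P : T(x̃) → T(P x̃)` is bijective,
every morphism of `S̄(P x̃)` has exactly `e x̃` preimages in `S̄(x̃)`, and
`e x̃ = 1` whenever `S̄(P x̃)` is empty. -/
structure IsRamifiedCovering {D C : Type u} [SmallCategory D] [SmallCategory C]
    (P : D ⥤ C) (e : D → ℕ) : Prop where
  nonempty : Nonempty C
  zigzag : ∀ x y : C, Zigzag x y
  one_le : ∀ x : D, 1 ≤ e x
  tgt_bij : ∀ x : D, Function.Bijective (tgtMap P x)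
  src_count : ∀ (x : D) (g : Src C (P.obj x)), g ≠ ⟨P.obj x, 𝟙 (P.obj x)⟩ →
    Nat.card {h : Src D x // h ≠ ⟨x, 𝟙 x⟩ ∧ srcMap P x h = g} = e x
  ram_one : ∀ x : D, (∀ g : Src C (P.obj x), g = ⟨P.obj x, 𝟙 (P.obj x)⟩) → e x = 1


/-- A composable chain of `n` morphisms `x₀ → x₁ → ⋯ → xₙ` in `C`
(an element of `N_n(C)`). -/
structure Chain (C : Type u) [SmallCategory C] (n : ℕ) : Type u where
  obj : Fin (n + 1) → C
  map : ∀ i : Fin n, obj i.castSucc ⟶ obj i.succ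

/-- A chain is non-degenerate if none of its morphisms is an identity
(an element of `N̄_n(C)`). -/
def Chain.NonDeg {C : Type u} [SmallCategory C] {n : ℕ} (c : Chain C n) : Prop :=
  ∀ i : Fin n,
    (⟨c.obj i.succ, c.map i⟩ : Src C (c.obj i.castSucc)) ≠ ⟨c.obj i.castSucc, 𝟙 _⟩

/-- The image of a chain under a functor `P`. -/
def Chain.push {D C : Type u} [SmallCategory D] [SmallCategory C] (P : D ⥤ C) {n : ℕ}
    (c : Chain D n) : Chain C n :=
  ⟨fun i => P.obj (c.obj i), fun i => P.map (c.map i)⟩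

/-- The constant identity chain `1_x` at an object `x`. -/
def Chain.const (C : Type u) [SmallCategory C] (x : C) (n : ℕ) : Chain C n :=
  ⟨fun _ => x, fun _ => 𝟙 x⟩

/-- `P` is a `d`-fold ramified covering: for every object `x` of `C`, the multiset
`R(x)` of objects over `x`, each counted with multiplicity its ramification number,
has cardinality `d`, i.e. `Σ_{P xt = x} e(xt) = d`. -/
def IsDFold {D C : Type u} [SmallCategory D] [SmallCategory C]
    (P : D ⥤ C) (e : D → ℕ) (d : ℕ) : Prop :=
  ∀ x : C, Nat.card (Σ a : {a : D // P.obj a = x}, Fin (e a.1)) = d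

section Basics
variable {A : Type u} [SmallCategory A]

/-- `f` is an identity morphism (as an untyped statement). -/
def IsId {x y : A} (f : x ⟶ y) : Prop := ∃ h : x = y, f = eqToHom h

lemma src_eq_id_iff {x y : A} (f : x ⟶ y) :
    (⟨y, f⟩ : Src A x) = ⟨x, 𝟙 x⟩ ↔ IsId f := by
  constructor
  · intro hh
    obtain ⟨h1, h2⟩ := Sigma.mk.inj_iff.mp hh
    subst h1
    exact ⟨rfl, by simpa using h2⟩
  · rintro ⟨rfl, rfl⟩; simp

lemma tgt_eq_id_iff {x y : A} (f : x ⟶ y) :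
    (⟨x, f⟩ : Tgt A y) = ⟨y, 𝟙 y⟩ ↔ IsId f := by
  constructor
  · intro hh
    obtain ⟨h1, h2⟩ := Sigma.mk.inj_iff.mp hh
    subst h1
    exact ⟨rfl, by simpa using h2⟩
  · rintro ⟨rfl, rfl⟩; simp

lemma nonDeg_iff {n : ℕ} (c : Chain A n) : c.NonDeg ↔ ∀ i : Fin n, ¬ IsId (c.map i) := by
  exact forall_congr' fun i => not_congr (src_eq_id_iff _)

lemma isId_eqToHom_comp_iff {x x' y : A} (h : x' = x) (f : x ⟶ y) :
    IsId (eqToHom h ≫ f) ↔ IsId f := by subst h; simp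
lemma isId_comp_eqToHom_iff {x y y' : A} (h : y = y') (f : x ⟶ y) :
    IsId (f ≫ eqToHom h) ↔ IsId f := by subst h; simp

/-- extensionality for chains -/
lemma Chain.ext_of {n : ℕ} {c c' : Chain A n} (ho : ∀ i, c.obj i = c'.obj i)
    (hm : ∀ i : Fin n, c.map i = eqToHom (ho _) ≫ c'.map i ≫ eqToHom (ho _).symm) :
    c = c' := by
  obtain ⟨o, m⟩ := c; obtain ⟨o', m'⟩ := c'
  have : o = o' := funext ho
  subst this
  simp only [mk.injEq, heq_eq_eq, true_and]
  funext i
  simpa using hm i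

noncomputable instance {n : ℕ} [Finite A] [∀ a b : A, Finite (a ⟶ b)] : Finite (Chain A n) := by
  apply Finite.of_injective
    (fun c : Chain A n => (⟨c.obj, c.map⟩ : Σ o : Fin (n+1) → A, ∀ i : Fin n, o i.castSucc ⟶ o i.succ))
  rintro ⟨o, m⟩ ⟨o', m'⟩ hh
  obtain ⟨h1, h2⟩ := Sigma.mk.inj_iff.mp hh
  subst h1; simpa using h2

/-- init of a chain: drop the last morphism -/
def Chain.init {n : ℕ} (c : Chain A (n+1)) : Chain A n where
  obj i := c.obj i.castSucc
  map i := c.map i.castSucc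

/-- snoc: append `f : c.obj last ⟶ y` -/
def Chain.snocC {n : ℕ} (c : Chain A n) {y : A} (f : c.obj (Fin.last n) ⟶ y) :
    Chain A (n+1) := by
  refine ⟨Fin.snoc c.obj y, fun i => Fin.lastCases ?_ (fun j => ?_) i⟩
  · exact eqToHom (by simp) ≫ f ≫ eqToHom (by simp)
  · exact eqToHom (by simp) ≫ c.map j ≫ eqToHom (by simp [-Fin.castSucc_succ, Fin.succ_castSucc])

@[simp] lemma Chain.snocC_obj_castSucc {n : ℕ} (c : Chain A n) {y : A}
    (f : c.obj (Fin.last n) ⟶ y) (i : Fin (n+1)) :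
    (c.snocC f).obj i.castSucc = c.obj i := by simp [Chain.snocC]

@[simp] lemma Chain.snocC_obj_last {n : ℕ} (c : Chain A n) {y : A}
    (f : c.obj (Fin.last n) ⟶ y) :
    (c.snocC f).obj (Fin.last (n+1)) = y := by simp [Chain.snocC]

lemma Chain.snocC_map_castSucc {n : ℕ} (c : Chain A n) {y : A}
    (f : c.obj (Fin.last n) ⟶ y) (j : Fin n) :
    (c.snocC f).map j.castSucc =
      eqToHom (by simp) ≫ c.map j ≫ eqToHom (by simp [-Fin.castSucc_succ, Fin.succ_castSucc]) := by
  simp [Chain.snocC]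

lemma Chain.snocC_map_last {n : ℕ} (c : Chain A n) {y : A}
    (f : c.obj (Fin.last n) ⟶ y) :
    (c.snocC f).map (Fin.last n) =
      eqToHom (by simp) ≫ f ≫ eqToHom (by simp) := by
  simp [Chain.snocC]

@[simp] lemma Chain.init_obj {n : ℕ} (c : Chain A (n+1)) (i : Fin (n+1)) :
    c.init.obj i = c.obj i.castSucc := rfl

@[simp] lemma Chain.init_map {n : ℕ} (c : Chain A (n+1)) (i : Fin n) :
    c.init.map i = c.map i.castSucc := rfl

lemma Chain.init_snocC {n : ℕ} (c : Chain A n) {y : A} (f : c.obj (Fin.last n) ⟶ y) :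
    (c.snocC f).init = c := by
  apply Chain.ext_of (fun i => by simp)
  intro i
  simp [Chain.snocC_map_castSucc]

lemma Chain.snocC_init {n : ℕ} (c : Chain A (n+1)) :
    c.init.snocC (c.map (Fin.last n)) = c := by
  apply Chain.ext_of (fun i => by
    induction i using Fin.lastCases with
    | last => simp [Chain.snocC]
    | cast j => simp [Chain.snocC])
  intro i
  induction i using Fin.lastCases with
  | last => erw [Chain.snocC_map_last]; simp
  | cast j => erw [Chain.snocC_map_castSucc]; simp

section Part2
variable {A : Type u} [SmallCategory A]

lemma Chain.init_nonDeg {n : ℕ} {c : Chain A (n+1)} (h : c.NonDeg) : c.init.NonDeg :=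
  fun i => h i.castSucc

/-- helper for sigma extensionality -/
lemma sigma_ext_helper {n : ℕ} {x : A} {c₁ c₂ : {c : Chain A n // c.NonDeg}} (h : c₁ = c₂)
    {f₁ : c₁.1.obj (Fin.last n) ⟶ x} {f₂ : c₂.1.obj (Fin.last n) ⟶ x} {h₁ : ¬ IsId f₁}
    {h₂ : ¬ IsId f₂}
    (hf : f₁ = eqToHom (by rw [h]) ≫ f₂) :
    (⟨c₁, ⟨f₁, h₁⟩⟩ :
      Σ c' : {c : Chain A n // c.NonDeg}, {f : c'.1.obj (Fin.last n) ⟶ x // ¬ IsId f}) =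
      ⟨c₂, ⟨f₂, h₂⟩⟩ := by
  subst h
  simp only [eqToHom_refl, Category.id_comp] at hf
  subst hf
  rfl

/-- The structural snoc decomposition of nondegenerate chains with fixed endpoint. -/
noncomputable def endEquiv {n : ℕ} (x : A) :
    {c : Chain A (n+1) // c.NonDeg ∧ c.obj (Fin.last (n+1)) = x} ≃
      Σ c' : {c : Chain A n // c.NonDeg}, {f : c'.1.obj (Fin.last n) ⟶ x // ¬ IsId f} where
  toFun c := ⟨⟨c.1.init, Chain.init_nonDeg c.2.1⟩,
    ⟨c.1.map (Fin.last n) ≫ eqToHom c.2.2,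
      by
        refine mt (isId_comp_eqToHom_iff _ _).mp ?_
        exact ((nonDeg_iff c.1).mp c.2.1) (Fin.last n)⟩⟩
  invFun p := ⟨p.1.1.snocC p.2.1,
    by
      constructor
      · rw [nonDeg_iff]
        intro i
        induction i using Fin.lastCases with
        | last =>
          rw [Chain.snocC_map_last]
          rw [isId_eqToHom_comp_iff, isId_comp_eqToHom_iff]
          exact p.2.2
        | cast j =>
          rw [Chain.snocC_map_castSucc]
          rw [isId_eqToHom_comp_iff, isId_comp_eqToHom_iff]
          exact (nonDeg_iff p.1.1).mp p.1.2 j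
      · exact Chain.snocC_obj_last _ _⟩
  left_inv := by
    rintro ⟨c, hnd, hend⟩
    apply Subtype.ext
    dsimp only
    subst hend
    simp only [eqToHom_refl, Category.comp_id]
    erw [Category.comp_id]
    exact c.snocC_init
  right_inv := by
    rintro ⟨⟨c', hnd⟩, ⟨f, hf⟩⟩
    dsimp only
    apply sigma_ext_helper (Subtype.ext (Chain.init_snocC c' f))
    simp only [Chain.snocC_map_last, Category.assoc, eqToHom_trans, eqToHom_refl,
      Category.comp_id]
    simp
end Part2

section Part3
variable (A : Type u) [SmallCategory A]

/-- number of non-identity morphisms from `y` to `x` -/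
noncomputable def mbar (y x : A) : ℕ := Nat.card {f : y ⟶ x // ¬ IsId f}

/-- number of non-identity morphisms out of `y` -/
noncomputable def sbar (y : A) : ℕ := Nat.card {g : Src A y // g ≠ ⟨y, 𝟙 y⟩}

/-- number of nondegenerate `m`-chains ending at `x` -/
noncomputable def tcnt (m : ℕ) (x : A) : ℕ :=
  Nat.card {c : Chain A m // c.NonDeg ∧ c.obj (Fin.last m) = x}

variable {A}

lemma natCard_sigma {ι : Type u} [Fintype ι] (f : ι → Type v) [∀ i, Finite (f i)] :
    Nat.card (Σ i, f i) = ∑ i : ι, Nat.card (f i) := by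
  classical
  letI := fun i => Fintype.ofFinite (f i)
  simp [Nat.card_eq_fintype_card, Fintype.card_sigma]

def srcSigmaEquiv (y : A) :
    {g : Src A y // g ≠ ⟨y, 𝟙 y⟩} ≃ Σ x : A, {f : y ⟶ x // ¬ IsId f} where
  toFun := fun ⟨⟨x, f⟩, hg⟩ => ⟨x, f, fun hid => hg ((src_eq_id_iff f).mpr hid)⟩
  invFun := fun ⟨x, f, hf⟩ => ⟨⟨x, f⟩, fun hh => hf ((src_eq_id_iff f).mp hh)⟩
  left_inv := fun ⟨⟨x, f⟩, hg⟩ => rfl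
  right_inv := fun ⟨x, f, hf⟩ => rfl

variable [Fintype A] [∀ a b : A, Finite (a ⟶ b)]

lemma sbar_eq_sum (y : A) : sbar A y = ∑ x : A, mbar A y x := by
  rw [sbar, Nat.card_congr (srcSigmaEquiv y), natCard_sigma]
  rfl

lemma tcnt_zero (x : A) : tcnt A 0 x = 1 := by
  rw [tcnt, Nat.card_eq_one_iff_unique]
  constructor
  · constructor
    rintro ⟨c, -, hend⟩ ⟨c', -, hend'⟩
    apply Subtype.ext
    apply Chain.ext_of (fun i => ?_) (fun i => i.elim0)
    have hi : i = Fin.last 0 := Fin.fin_one_eq_zero i ▸ rfl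
    rw [hi, hend, hend']
  · exact ⟨⟨⟨fun _ => x, fun i => i.elim0⟩, fun i => i.elim0, rfl⟩⟩

/-- fibre of nondeg chains by endpoint -/
def endFiberEquiv (m : ℕ) (x : A) :
    {c' : {c : Chain A m // c.NonDeg} // c'.1.obj (Fin.last m) = x} ≃
      {c : Chain A m // c.NonDeg ∧ c.obj (Fin.last m) = x} where
  toFun := fun ⟨⟨c, h1⟩, h2⟩ => ⟨c, h1, h2⟩
  invFun := fun ⟨c, h1, h2⟩ => ⟨⟨c, h1⟩, h2⟩
  left_inv := fun ⟨⟨c, h1⟩, h2⟩ => rfl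
  right_inv := fun ⟨c, h1, h2⟩ => rfl

lemma card_nonDeg_eq_sum_tcnt (m : ℕ) :
    Nat.card {c : Chain A m // c.NonDeg} = ∑ x : A, tcnt A m x := by
  classical
  letI : Fintype {c : Chain A m // c.NonDeg} := Fintype.ofFinite _
  rw [← Nat.card_congr (Equiv.sigmaFiberEquiv (fun c' : {c : Chain A m // c.NonDeg} =>
    c'.1.obj (Fin.last m))), natCard_sigma]
  exact Finset.sum_congr rfl fun x _ => Nat.card_congr (endFiberEquiv m x)

lemma tcnt_succ (m : ℕ) (x : A) :
    tcnt A (m+1) x = ∑ y : A, tcnt A m y * mbar A y x := by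
  classical
  letI : Fintype {c : Chain A m // c.NonDeg} := Fintype.ofFinite _
  rw [tcnt, Nat.card_congr (endEquiv x), natCard_sigma]
  rw [← Fintype.sum_fiberwise (fun c' : {c : Chain A m // c.NonDeg} =>
    c'.1.obj (Fin.last m)) (fun c' => Nat.card {f : c'.1.obj (Fin.last m) ⟶ x // ¬ IsId f})]
  refine Finset.sum_congr rfl fun y _ => ?_
  have : ∀ c' : {c' : {c : Chain A m // c.NonDeg} // c'.1.obj (Fin.last m) = y},
      Nat.card {f : c'.1.1.obj (Fin.last m) ⟶ x // ¬ IsId f} = mbar A y x := by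
    rintro ⟨⟨c, h1⟩, h2⟩
    dsimp only at h2 ⊢
    rw [h2]
    rfl
  rw [Finset.sum_congr rfl fun c' _ => this c', Finset.sum_const, smul_eq_mul]
  congr 1
  rw [Finset.card_univ, ← Nat.card_eq_fintype_card, Nat.card_congr (endFiberEquiv m y)]
  rfl
end Part3

section Part4
variable {D C : Type u} [SmallCategory D] [SmallCategory C]
  (P : D ⥤ C) (e : D → ℕ)

lemma isId_map_iff (h : IsRamifiedCovering P e) {a b : D} (f : a ⟶ b) :
    IsId (P.map f) ↔ IsId f := by
  constructor
  · intro hid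
    have h1 : tgtMap P b ⟨a, f⟩ = tgtMap P b ⟨b, 𝟙 b⟩ := by
      have h2 : (⟨P.obj a, P.map f⟩ : Tgt C (P.obj b)) = ⟨P.obj b, 𝟙 (P.obj b)⟩ :=
        (tgt_eq_id_iff (P.map f)).mpr hid
      have h3 : tgtMap P b ⟨b, 𝟙 b⟩ = ⟨P.obj b, 𝟙 (P.obj b)⟩ := by
        simp only [tgtMap, P.map_id]
      rw [h3]
      exact h2
    have := (h.tgt_bij b).1 h1
    exact (tgt_eq_id_iff f).mp this
  · rintro ⟨rfl, rfl⟩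
    exact ⟨rfl, by simp⟩

lemma srcMap_ne_id (h : IsRamifiedCovering P e) (x : D) (s : Src D x)
    (hs : s ≠ ⟨x, 𝟙 x⟩) : srcMap P x s ≠ ⟨P.obj x, 𝟙 (P.obj x)⟩ := by
  obtain ⟨b, f⟩ := s
  intro hc
  exact hs ((src_eq_id_iff f).mpr ((isId_map_iff P e h f).mp ((src_eq_id_iff (P.map f)).mp hc)))

/-- the equivalence of non-identity targets -/
noncomputable def tbarEquiv (h : IsRamifiedCovering P e) (x : D) :
    {g : Tgt D x // g ≠ ⟨x, 𝟙 x⟩} ≃ {g : Tgt C (P.obj x) // g ≠ ⟨P.obj x, 𝟙 (P.obj x)⟩} :=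
  Equiv.subtypeEquiv (Equiv.ofBijective _ (h.tgt_bij x)) (by
    rintro ⟨a, f⟩
    rw [not_iff_not]
    show _ ↔ (⟨P.obj a, P.map f⟩ : Tgt C (P.obj x)) = _
    rw [tgt_eq_id_iff, tgt_eq_id_iff, isId_map_iff P e h])

variable [Fintype D] [Fintype C] [∀ a b : D, Finite (a ⟶ b)] [∀ a b : C, Finite (a ⟶ b)]

def tbarFiberEquiv {A : Type u} [SmallCategory A] (x y : A) :
    {g : {g : Tgt A x // g ≠ ⟨x, 𝟙 x⟩} // g.1.1 = y} ≃ {f : y ⟶ x // ¬ IsId f} where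
  toFun p := ⟨eqToHom p.2.symm ≫ p.1.1.2, by
    rw [isId_eqToHom_comp_iff]
    intro hid
    exact p.1.2 (by
      obtain ⟨⟨⟨z, f⟩, hne⟩, hz⟩ := p
      exact (tgt_eq_id_iff f).mpr hid)⟩
  invFun f := ⟨⟨⟨y, f.1⟩, fun hc => f.2 ((tgt_eq_id_iff f.1).mp hc)⟩, rfl⟩
  left_inv := by
    rintro ⟨⟨⟨z, f⟩, hne⟩, rfl⟩
    simp
  right_inv := by
    rintro ⟨f, hf⟩
    simp

lemma sum_mbar_tbar {A : Type u} [SmallCategory A] [Fintype A] [∀ a b : A, Finite (a ⟶ b)]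
    (x : A) (k : A → ℕ) :
    ∑ y : A, k y * mbar A y x =
      Nat.card (Σ g : {g : Tgt A x // g ≠ ⟨x, 𝟙 x⟩}, Fin (k g.1.1)) := by
  classical
  letI : Fintype {g : Tgt A x // g ≠ ⟨x, 𝟙 x⟩} := Fintype.ofFinite _
  rw [natCard_sigma]
  rw [← Fintype.sum_fiberwise (fun g : {g : Tgt A x // g ≠ ⟨x, 𝟙 x⟩} => g.1.1)
    (fun g => Nat.card (Fin (k g.1.1)))]
  refine Finset.sum_congr rfl fun y _ => ?_
  have : ∀ g : {g : {g : Tgt A x // g ≠ ⟨x, 𝟙 x⟩} // g.1.1 = y},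
      Nat.card (Fin (k g.1.1.1)) = k y := by
    rintro ⟨⟨⟨z, f⟩, hne⟩, rfl⟩
    simp
  rw [Finset.sum_congr rfl fun g _ => this g, Finset.sum_const, smul_eq_mul]
  rw [Finset.card_univ, ← Nat.card_eq_fintype_card, Nat.card_congr (tbarFiberEquiv x y)]
  exact mul_comm _ _

lemma tcnt_covers (h : IsRamifiedCovering P e) : ∀ (m : ℕ) (a : D),
    tcnt D m a = tcnt C m (P.obj a) := by
  intro m
  induction m with
  | zero => intro a; rw [tcnt_zero, tcnt_zero]
  | succ m ih =>
    intro a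
    rw [tcnt_succ, tcnt_succ]
    have step1 : ∀ b : D, tcnt D m b * mbar D b a = tcnt C m (P.obj b) * mbar D b a :=
      fun b => by rw [ih b]
    rw [Finset.sum_congr rfl fun b _ => step1 b]
    rw [sum_mbar_tbar a (fun b => tcnt C m (P.obj b))]
    rw [sum_mbar_tbar (P.obj a) (fun y => tcnt C m y)]
    exact Nat.card_congr (Equiv.sigmaCongrLeft
      (β := fun g : {g : Tgt C (P.obj a) // g ≠ ⟨P.obj a, 𝟙 (P.obj a)⟩} =>
        Fin (tcnt C m g.1.1)) (tbarEquiv P e h a))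

lemma sbar_covers (h : IsRamifiedCovering P e) (x : D) :
    sbar D x = sbar C (P.obj x) * e x := by
  classical
  letI : Fintype {g : Src C (P.obj x) // g ≠ ⟨P.obj x, 𝟙 (P.obj x)⟩} := Fintype.ofFinite _
  have σdef : ∀ s : {s : Src D x // s ≠ ⟨x, 𝟙 x⟩},
      srcMap P x s.1 ≠ ⟨P.obj x, 𝟙 (P.obj x)⟩ := fun s => srcMap_ne_id P e h x s.1 s.2
  set σ : {s : Src D x // s ≠ ⟨x, 𝟙 x⟩} → {g : Src C (P.obj x) // g ≠ ⟨P.obj x, 𝟙 (P.obj x)⟩} :=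
    fun s => ⟨srcMap P x s.1, σdef s⟩ with hσ
  rw [sbar, ← Nat.card_congr (Equiv.sigmaFiberEquiv σ), natCard_sigma]
  have : ∀ g : {g : Src C (P.obj x) // g ≠ ⟨P.obj x, 𝟙 (P.obj x)⟩},
      Nat.card {s // σ s = g} = e x := by
    intro g
    rw [← h.src_count x g.1 g.2]
    apply Nat.card_congr
    exact {
      toFun := fun s => ⟨s.1.1, s.1.2, congrArg Subtype.val s.2⟩
      invFun := fun s => ⟨⟨s.1, s.2.1⟩, Subtype.ext s.2.2⟩
      left_inv := fun s => by ext : 2 <;> rfl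
      right_inv := fun s => rfl }
  rw [Finset.sum_congr rfl fun g _ => this g, Finset.sum_const, smul_eq_mul]
  rw [Finset.card_univ, ← Nat.card_eq_fintype_card]
  rfl
end Part4

section Part5
variable {A : Type u} [SmallCategory A] [Fintype A] [∀ a b : A, Finite (a ⟶ b)]

lemma card_nonDeg_zero : Nat.card {c : Chain A 0 // c.NonDeg} = Fintype.card A := by
  rw [card_nonDeg_eq_sum_tcnt]
  simp [tcnt_zero]

lemma card_nonDeg_succ (m : ℕ) :
    Nat.card {c : Chain A (m+1) // c.NonDeg} = ∑ y : A, tcnt A m y * sbar A y := by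
  rw [card_nonDeg_eq_sum_tcnt]
  rw [Finset.sum_congr rfl fun x (_ : x ∈ Finset.univ) => tcnt_succ m x]
  rw [Finset.sum_comm]
  refine Finset.sum_congr rfl fun y _ => ?_
  rw [sbar_eq_sum, Finset.mul_sum]

end Part5

section Part6
variable {D C : Type u} [SmallCategory D] [SmallCategory C]
  [Fintype D] [Fintype C] [∀ a b : D, Finite (a ⟶ b)] [∀ a b : C, Finite (a ⟶ b)]
  (P : D ⥤ C) (e : D → ℕ) (d : ℕ)

lemma main_succ (h : IsRamifiedCovering P e) (hd : IsDFold P e d) (m : ℕ) :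
    Nat.card {c : Chain D (m+1) // c.NonDeg} =
      d * Nat.card {c : Chain C (m+1) // c.NonDeg} := by
  classical
  rw [card_nonDeg_succ, card_nonDeg_succ]
  have step : ∀ a : D, tcnt D m a * sbar D a =
      e a * (tcnt C m (P.obj a) * sbar C (P.obj a)) := by
    intro a
    rw [tcnt_covers P e h m a, sbar_covers P e h a]
    ring
  rw [Finset.sum_congr rfl fun a (_ : a ∈ Finset.univ) => step a]
  rw [← Fintype.sum_fiberwise (fun a : D => P.obj a)
    (fun a => e a * (tcnt C m (P.obj a) * sbar C (P.obj a)))]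
  rw [Finset.mul_sum]
  refine Finset.sum_congr rfl fun y _ => ?_
  have h2 : ∀ a : {a : D // P.obj a = y},
      e a.1 * (tcnt C m (P.obj a.1) * sbar C (P.obj a.1)) =
        e a.1 * (tcnt C m y * sbar C y) := by
    rintro ⟨a, rfl⟩; rfl
  rw [Finset.sum_congr rfl fun a (_ : a ∈ Finset.univ) => h2 a, ← Finset.sum_mul]
  have h3 : ∑ a : {a : D // P.obj a = y}, e a.1 = d := by
    rw [← hd y, natCard_sigma]
    simp
  rw [h3]

lemma sum_e_eq (hd : IsDFold P e d) : ∑ a : D, e a = Fintype.card C * d := by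
  classical
  rw [← Fintype.sum_fiberwise (fun a : D => P.obj a) e]
  have h3 : ∀ y : C, ∑ a : {a : D // P.obj a = y}, e a.1 = d := by
    intro y
    rw [← hd y, natCard_sigma]
    simp
  rw [Finset.sum_congr rfl fun y (_ : y ∈ Finset.univ) => h3 y]
  simp [Finset.sum_const, Finset.card_univ, mul_comm]

end Part6

/-- For a `d`-fold ramified covering of finite categories, the power
series `χ_{C̃}(t) = Σₙ #N̄_n(C̃) tⁿ` satisfies
`χ_{C̃}(t) = d·χ_C(t) − d·#Ob(C) + #Ob(C̃)`, and `d·#Ob(C) − #Ob(C̃)` equals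
`V = Σ_{xt ∈ Ob(C̃)} (e(xt) − 1)`, so that `χ_{C̃}(t) = d·χ_C(t) − V`. -/
theorem ramifiedCovering_chain_power_series {D C : Type u}
    [SmallCategory D] [SmallCategory C]
    [Fintype D] [Fintype C] [∀ a b : D, Finite (a ⟶ b)] [∀ a b : C, Finite (a ⟶ b)]
    (P : D ⥤ C) (e : D → ℕ) (d : ℕ)
    (h : IsRamifiedCovering P e) (hd : IsDFold P e d) :
    (PowerSeries.mk (fun n => (Nat.card {c : Chain D n // c.NonDeg} : ℤ)) =
      PowerSeries.C (R := ℤ) d * PowerSeries.mk (fun n => (Nat.card {c : Chain C n // c.NonDeg} : ℤ))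
        - PowerSeries.C (R := ℤ) (d * Fintype.card C) + PowerSeries.C (R := ℤ) (Fintype.card D)) ∧
    ((d * Fintype.card C - Fintype.card D : ℤ) = ∑ a : D, ((e a : ℤ) - 1)) := by
  constructor
  · ext n
    rw [map_add, map_sub, PowerSeries.coeff_C_mul, PowerSeries.coeff_mk, PowerSeries.coeff_mk,
      PowerSeries.coeff_C, PowerSeries.coeff_C]
    cases n with
    | zero =>
      rw [card_nonDeg_zero, card_nonDeg_zero]
      simp only [if_pos rfl]
      push_cast
      ring
    | succ m =>
      rw [main_succ P e d h hd m]
      simp only [Nat.succ_ne_zero, if_neg (Nat.succ_ne_zero m)]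
      push_cast
      ring
  · have h1 : ∑ a : D, e a = Fintype.card C * d := sum_e_eq P e d hd
    have h2 : (∑ a : D, (e a : ℤ)) = (Fintype.card C : ℤ) * d := by
      rw [← Nat.cast_sum]
      exact_mod_cast congrArg (Nat.cast : ℕ → ℤ) h1
    rw [Finset.sum_sub_distrib, h2]
    rw [Finset.sum_const, Finset.card_univ, nsmul_eq_mul, mul_one]
    ring
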